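/- arXiv:1104.3900 — 3 statements merged into one kernel-verified Lean document; each statement's English description precedes it below -/
import Mathlib

section
/- Let n ≥ 2 and let a ∈ ℤ^n satisfy F_n(a) = 0. For each k, let b^(k) be the tuple obtained from a by replacing a_k with 2(Σ_{i≠k} a_i) + 1 − a_k (which again satisfies F_n = 0). Then: (1) for every k, the height of b^(k) differs from the height of a; and (2) there is at most one index k for which the height of b^(k) is smaller than the height of a. -/
open Finset

def F {n : ℕ} (x : Fin n → ℤ) : ℤ :=
  (∑ i, x i) ^ 2 - (∑ i, x i) - 4 * ∑ i, ∑ j, if i < j then x i * x j else 0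

def nbr {n : ℕ} (a : Fin n → ℤ) (k : Fin n) : Fin n → ℤ :=
  Function.update a k (2 * (∑ i ∈ univ.erase k, a i) + 1 - a k)

def height {n : ℕ} (x : Fin n → ℤ) : ℤ := |1 + ∑ i, x i|

lemma sum_nbr {n : ℕ} (a : Fin n → ℤ) (k : Fin n) :
    ∑ i, nbr a k i = 3 * (∑ i, a i) - 4 * a k + 1 := by
  have he : ∑ i ∈ univ.erase k, a i = (∑ i, a i) - a k :=
    Finset.sum_erase_eq_sub (Finset.mem_univ k)
  unfold nbr
  rw [Finset.sum_update_of_mem (Finset.mem_univ k), ← Finset.erase_eq, he]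
  ring

lemma sq_sum_eq {n : ℕ} (a : Fin n → ℤ) :
    (∑ i, a i) ^ 2 = (∑ i, a i * a i)
      + 2 * ∑ i, ∑ j, if i < j then a i * a j else 0 := by
  have h1 : (∑ i, a i) ^ 2 = ∑ i, ∑ j, a i * a j := by
    rw [sq, Finset.sum_mul_sum]
  have h2 : ∀ i j : Fin n, a i * a j =
      (if i < j then a i * a j else 0) + (if j < i then a i * a j else 0)
      + (if i = j then a i * a j else 0) := by
    intro i j
    rcases lt_trichotomy i j with h | h | h
    · simp [h, h.ne, h.ne', not_lt.mpr h.le]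
    · simp [h]
    · simp [h, h.ne, h.ne', not_lt.mpr h.le]
  have h3 : (∑ i, ∑ j, if j < i then a i * a j else 0)
      = ∑ i, ∑ j, if i < j then a i * a j else 0 := by
    rw [Finset.sum_comm]
    apply Finset.sum_congr rfl; intro i _
    apply Finset.sum_congr rfl; intro j _
    rcases lt_or_ge i j with h | h
    · simp [h, mul_comm]
    · simp [not_lt.mpr h]
  have h4 : (∑ i : Fin n, ∑ j, if i = j then a i * a j else 0) = ∑ i, a i * a i := by
    apply Finset.sum_congr rfl; intro i _
    simp
  calc (∑ i, a i) ^ 2 = ∑ i, ∑ j, a i * a j := h1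
    _ = (∑ i, ∑ j, if i < j then a i * a j else 0)
        + (∑ i, ∑ j, if j < i then a i * a j else 0)
        + (∑ i, ∑ j, if i = j then a i * a j else 0) := by
        simp_rw [← Finset.sum_add_distrib]
        exact Finset.sum_congr rfl fun i _ => Finset.sum_congr rfl fun j _ => h2 i j
    _ = _ := by rw [h3, h4]; ring

/-- Any two neighbors of a solution have different heights from it, and at most one
neighbor has a smaller height. -/
theorem stmt_5 (n : ℕ) (hn : 2 ≤ n) (a : Fin n → ℤ) (ha : F a = 0) :
    (∀ k, height (nbr a k) ≠ height a) ∧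
      (∀ k l, height (nbr a k) < height a → height (nbr a l) < height a → k = l) := by
  have hsq : 2 * (∑ i, a i * a i) = (∑ i, a i) ^ 2 + ∑ i, a i := by
    have := sq_sum_eq a
    unfold F at ha
    linarith
  constructor
  · intro k h
    rw [height, height, sum_nbr, abs_eq_abs] at h
    omega
  · intro k l hk hl
    by_contra hkl
    rw [height, height, sum_nbr] at hk hl
    set s := ∑ i, a i with hs
    have hsub : a k * a k + a l * a l ≤ ∑ i, a i * a i := by
      have h := Finset.sum_le_sum_of_subset_of_nonneg
        (Finset.subset_univ ({k, l} : Finset (Fin n)))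
        (fun i _ _ => mul_self_nonneg (a i))
      rwa [Finset.sum_pair hkl] at h
    have h1 : (1 + (3 * s - 4 * a k + 1)) ^ 2 < (1 + s) ^ 2 := by
      have := pow_lt_pow_left₀ hk (abs_nonneg _) two_ne_zero
      rwa [sq_abs, sq_abs] at this
    have h2 : (1 + (3 * s - 4 * a l + 1)) ^ 2 < (1 + s) ^ 2 := by
      have := pow_lt_pow_left₀ hl (abs_nonneg _) two_ne_zero
      rwa [sq_abs, sq_abs] at this
    nlinarith [sq_nonneg (a k - a l), sq_nonneg (3 * (a k + a l) - 3 * (s + 1) + 1),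
      h1, h2, hsub, hsq]
end

section
/- For every n ≥ 4 and every natural number a, there exists an n-color fair game having a as one of its coordinates. In fact, writing S = (n−3)a and N = (n−3)a^2, the n-tuple (4(S^2 + N) + 3S + 1, S^2 + N, S^2 + N, a, a, …, a) (with a repeated n−3 times) is such a fair game. Hence C_n = ℕ for all n ≥ 4. -/
open Finset

lemma F_eq {n : ℕ} (x : Fin n → ℤ) :
    F x = 2 * ∑ i, (x i) ^ 2 - (∑ i, x i) ^ 2 - ∑ i, x i := by
  have key : (∑ i, x i) ^ 2
      = 2 * (∑ i, ∑ j, if i < j then x i * x j else 0) + ∑ i, (x i) ^ 2 := by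
    rw [sq, Finset.sum_mul_sum]
    have h : ∀ i : Fin n, ∑ j, x i * x j
        = ((∑ j, if i < j then x i * x j else 0)
          + ∑ j, if j < i then x i * x j else 0) + (x i) ^ 2 := by
      intro i
      rw [← Finset.sum_add_distrib]
      have : (x i) ^ 2 = ∑ j, if i = j then x i * x j else 0 := by
        rw [Finset.sum_ite_eq]; simp [sq]
      rw [this, ← Finset.sum_add_distrib]
      refine Finset.sum_congr rfl fun j _ => ?_
      rcases lt_trichotomy i j with h | h | h
      · simp [h, h.ne, lt_asymm h]
      · simp [h]
      · simp [h, h.ne', lt_asymm h]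
    rw [Finset.sum_congr rfl fun i _ => h i, Finset.sum_add_distrib,
      Finset.sum_add_distrib]
    have hswap : (∑ i, ∑ j, if j < i then x i * x j else 0)
        = ∑ i, ∑ j, if i < j then x i * x j else 0 := by
      rw [Finset.sum_comm]
      exact Finset.sum_congr rfl fun i _ => Finset.sum_congr rfl fun j _ => by
        rcases lt_or_ge i j with h | h <;> simp [h, not_lt.2, mul_comm]
    rw [hswap]; ring
  unfold F
  rw [key]; ring

lemma F_cast {m n : ℕ} (h : m = n) (x : Fin n → ℤ) :
    F (fun i : Fin m => x (Fin.cast h i)) = F x := by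
  subst h; rfl

/-- For `n ≥ 4` (`n = 3 + (d+1)`), writing `S = (n−3)a` and `N = (n−3)a²`, the tuple
`(4(S²+N)+3S+1, S²+N, S²+N, a, …, a)` is an `n`-color fair game with `a` as a
coordinate; hence `C_n = ℕ` for every `n ≥ 4`. -/
theorem stmt_10 :
    (∀ (d : ℕ) (a : ℕ),
      let S : ℤ := (d + 1 : ℕ) * a
      let N : ℤ := (d + 1 : ℕ) * (a : ℤ) ^ 2
      let x : Fin (3 + (d + 1)) → ℤ :=
        Fin.append ![4 * (S ^ 2 + N) + 3 * S + 1, S ^ 2 + N, S ^ 2 + N]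
          (fun _ : Fin (d + 1) => (a : ℤ))
      F x = 0 ∧ (∀ i, 0 ≤ x i) ∧ ∃ i, x i = (a : ℤ)) ∧
    (∀ n : ℕ, 4 ≤ n → ∀ a : ℕ,
      ∃ x : Fin n → ℤ, F x = 0 ∧ (∀ i, 0 ≤ x i) ∧ ∃ i, x i = (a : ℤ)) := by
  have main : ∀ (d : ℕ) (a : ℕ),
      let S : ℤ := (d + 1 : ℕ) * a
      let N : ℤ := (d + 1 : ℕ) * (a : ℤ) ^ 2
      let x : Fin (3 + (d + 1)) → ℤ :=
        Fin.append ![4 * (S ^ 2 + N) + 3 * S + 1, S ^ 2 + N, S ^ 2 + N]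
          (fun _ : Fin (d + 1) => (a : ℤ))
      F x = 0 ∧ (∀ i, 0 ≤ x i) ∧ ∃ i, x i = (a : ℤ) := by
    intro d a
    set S : ℤ := (d + 1 : ℕ) * a with hS
    set N : ℤ := (d + 1 : ℕ) * (a : ℤ) ^ 2 with hN
    set x : Fin (3 + (d + 1)) → ℤ :=
      Fin.append ![4 * (S ^ 2 + N) + 3 * S + 1, S ^ 2 + N, S ^ 2 + N]
        (fun _ : Fin (d + 1) => (a : ℤ)) with hx
    have hsum : ∑ i, x i = 6 * (S ^ 2 + N) + 4 * S + 1 := by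
      rw [hx, Fin.sum_univ_add]
      simp [Fin.sum_univ_three, Fin.append_left, Fin.append_right, hS]
      ring
    have hsumsq : ∑ i, (x i) ^ 2
        = (4 * (S ^ 2 + N) + 3 * S + 1) ^ 2 + 2 * (S ^ 2 + N) ^ 2 + N := by
      rw [hx, Fin.sum_univ_add]
      simp [Fin.sum_univ_three, Fin.append_left, Fin.append_right, hN]
      ring
    have ha : (0 : ℤ) ≤ a := Int.natCast_nonneg a
    have hSnn : 0 ≤ S := by positivity
    have hNnn : 0 ≤ N := by positivity
    refine ⟨?_, ?_, ?_⟩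
    · rw [F_eq, hsum, hsumsq]; ring
    · intro i
      refine Fin.addCases (fun j => ?_) (fun j => ?_) i
      · rw [Fin.append_left]
        fin_cases j <;> simp <;> positivity
      · rw [Fin.append_right]; exact ha
    · exact ⟨Fin.natAdd 3 0, by rw [Fin.append_right]⟩
  refine ⟨main, fun n hn a => ?_⟩
  obtain ⟨d, hd⟩ : ∃ d, n = 3 + (d + 1) := ⟨n - 4, by omega⟩
  obtain ⟨h0, h1, j, hj⟩ := main d a
  set S : ℤ := (d + 1 : ℕ) * a
  set N : ℤ := (d + 1 : ℕ) * (a : ℤ) ^ 2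
  set y : Fin (3 + (d + 1)) → ℤ :=
    Fin.append ![4 * (S ^ 2 + N) + 3 * S + 1, S ^ 2 + N, S ^ 2 + N]
      (fun _ : Fin (d + 1) => (a : ℤ)) with hy
  refine ⟨fun i => y (Fin.cast hd i), ?_, fun i => h1 _, ⟨Fin.cast hd.symm j, ?_⟩⟩
  · rw [F_cast hd]; exact h0
  · have h2 : Fin.cast hd (Fin.cast hd.symm j) = j := by ext; simp
    show y (Fin.cast hd (Fin.cast hd.symm j)) = (a : ℤ)
    rw [h2]; exact hj
end

section
/- Let c > 1 be a natural number that is a coordinate of some 3-color fair game (c ∈ C_3), and let m be the number of distinct prime factors of 2c+1 other than 3. Then the number of pairs (a, b) of integers with 0 ≤ a ≤ b ≤ c such that (a, b, c) is a 3-color fair game equals 2^(m−1); that is, up to permutation there are exactly 2^(m−1) fair games having c as their largest coordinate. -/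
open Finset

def C3 : Set ℕ :=
  {c : ℕ | ∃ x : Fin 3 → ℤ, F x = 0 ∧ (∀ i, 0 ≤ x i) ∧ ∃ i, x i = (c : ℤ)}

/- ### Auxiliary definitions and lemmas -/

noncomputable def gcount (n : ℕ) : ℕ := Nat.card {x : ZMod n // x^2 = -3}

def Pz (Z : ℕ) (u : ℤ) : Prop := (4*(Z:ℤ)) ∣ u^2+3

instance (Z : ℕ) : DecidablePred (Pz Z) := fun u => by unfold Pz; infer_instance

lemma gcount_one : gcount 1 = 1 := by
  rw [gcount, Nat.card_eq_fintype_card, Fintype.card_subtype]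
  decide

lemma gcount_three : gcount 3 = 1 := by
  rw [gcount, Nat.card_eq_fintype_card, Fintype.card_subtype]
  decide

lemma gcount_four : gcount 4 = 2 := by
  rw [gcount, Nat.card_eq_fintype_card, Fintype.card_subtype]
  decide

lemma gcount_mul (m n : ℕ) (h : m.Coprime n) : gcount (m*n) = gcount m * gcount n := by
  have e := ZMod.chineseRemainder h
  rw [gcount, gcount, gcount, ← Nat.card_prod]
  apply Nat.card_congr
  refine (Equiv.subtypeEquiv (q := fun y : ZMod m × ZMod n => y^2 = -3) e.toEquiv ?_).trans ?_
  · intro x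
    constructor
    · intro hx
      show e x ^ 2 = -3
      rw [← map_pow, hx]
      push_cast [map_neg, map_ofNat]
      rfl
    · intro hx
      have : e (x^2) = e (-3) := by
        rw [map_pow, map_neg]
        have : (e 3 : ZMod m × ZMod n) = 3 := by push_cast [map_ofNat]; rfl
        rw [this]; exact hx
      exact e.injective this
  · refine (Equiv.subtypeEquivRight ?_).trans (Equiv.subtypeProdEquivProd
      (p := fun a : ZMod m => a^2 = -3) (q := fun b : ZMod n => b^2 = -3))
    intro x
    constructor
    · intro hx
      have h1 := congrArg Prod.fst hx
      have h2 := congrArg Prod.snd hx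
      simp [Prod.pow_fst, Prod.pow_snd] at h1 h2 ⊢
      exact ⟨h1, h2⟩
    · intro ⟨h1, h2⟩
      ext
      · simpa using h1
      · simpa using h2

lemma int_key (p k : ℕ) (hp : p.Prime) (hp2 : p ≠ 2) (hp3 : p ≠ 3) (y w : ℤ)
    (h1 : (p^k:ℤ) ∣ y^2+3) (h2 : (p^k:ℤ) ∣ w^2+3) (hk : 0 < k) :
    (p^k:ℤ) ∣ y - w ∨ (p^k:ℤ) ∣ y + w := by
  have hpprime : Prime (p:ℤ) := Nat.prime_iff_prime_int.mp hp
  have hdvdmul : (p^k:ℤ) ∣ (y-w)*(y+w) := by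
    have : (y-w)*(y+w) = (y^2+3) - (w^2+3) := by ring
    rw [this]; exact dvd_sub h1 h2
  by_cases hD : (p:ℤ) ∣ y - w
  · -- show p ∤ y + w
    have hE : ¬ (p:ℤ) ∣ y + w := by
      intro hE
      have h2y : (p:ℤ) ∣ 2*y := by have := dvd_add hD hE; rw [show (2:ℤ)*y = y - w + (y + w) by ring]; exact this
      have hpy : (p:ℤ) ∣ y := by
        rcases (hpprime.dvd_mul.mp h2y) with h | h
        · exfalso
          have : p ∣ 2 := by exact_mod_cast Int.natCast_dvd_natCast.mp (by exact_mod_cast h)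
          have := (Nat.prime_dvd_prime_iff_eq hp Nat.prime_two).mp this
          exact hp2 this
        · exact h
      have hp1 : (p:ℤ) ∣ y^2+3 := dvd_trans (dvd_pow_self _ hk.ne') h1
      have : (p:ℤ) ∣ 3 := by
        have : (3:ℤ) = (y^2+3) - y*y := by ring
        rw [this]; exact dvd_sub hp1 (Dvd.dvd.mul_right hpy y)
      have : p ∣ 3 := by exact_mod_cast Int.natCast_dvd_natCast.mp (by exact_mod_cast this)
      have := (Nat.prime_dvd_prime_iff_eq hp Nat.prime_three).mp this
      exact hp3 this
    left
    have hcop : IsCoprime ((p:ℤ)^k) (y+w) :=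
      (IsCoprime.pow_left ((Prime.coprime_iff_not_dvd hpprime).mpr hE).symm.symm)
    have := hcop.dvd_of_dvd_mul_right (by push_cast at hdvdmul ⊢; exact hdvdmul)
    push_cast
    exact this
  · right
    have hcop : IsCoprime ((p:ℤ)^k) (y-w) :=
      (IsCoprime.pow_left ((Prime.coprime_iff_not_dvd hpprime).mpr hD))
    have := hcop.dvd_of_dvd_mul_left (by push_cast at hdvdmul ⊢; exact hdvdmul)
    push_cast
    exact this

lemma gcount_prime_pow (p k : ℕ) (hp : p.Prime) (hp2 : p ≠ 2) (hp3 : p ≠ 3) (hk : 0 < k)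
    (w : ℤ) (hw : ((p:ℤ)^k) ∣ w^2+3) : gcount (p^k) = 2 := by
  have hn : NeZero (p^k) := ⟨pow_ne_zero _ hp.pos.ne'⟩
  set x₀ : ZMod (p^k) := (w : ZMod (p^k)) with hx₀def
  have hcast : ((p:ℤ)^k) = ((p^k : ℕ) : ℤ) := by push_cast; ring
  have hx₀ : x₀^2 = -3 := by
    have : (((w^2+3 : ℤ)) : ZMod (p^k)) = 0 := by
      rw [ZMod.intCast_zmod_eq_zero_iff_dvd]; rw [← hcast]; exact hw
    push_cast at this
    linear_combination this
  have hne : x₀ ≠ -x₀ := by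
    intro h
    have h2 : ((2*w : ℤ) : ZMod (p^k)) = 0 := by push_cast; linear_combination h
    rw [ZMod.intCast_zmod_eq_zero_iff_dvd, ← hcast] at h2
    have hpd : (p:ℤ) ∣ 2*w := dvd_trans (dvd_pow_self _ hk.ne') h2
    have hpprime : Prime (p:ℤ) := Nat.prime_iff_prime_int.mp hp
    rcases hpprime.dvd_mul.mp hpd with h | h
    · have : p ∣ 2 := by exact_mod_cast h
      exact hp2 ((Nat.prime_dvd_prime_iff_eq hp Nat.prime_two).mp this)
    · have hw3 : (p:ℤ) ∣ 3 := by
        have h1 : (p:ℤ) ∣ w^2+3 := dvd_trans (dvd_pow_self _ hk.ne') hw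
        have : (3:ℤ) = (w^2+3) - w*w := by ring
        rw [this]; exact dvd_sub h1 (h.mul_right w)
      have : p ∣ 3 := by exact_mod_cast hw3
      exact hp3 ((Nat.prime_dvd_prime_iff_eq hp Nat.prime_three).mp this)
  have hset : {x : ZMod (p^k) | x^2 = -3} = {x₀, -x₀} := by
    ext x
    simp only [Set.mem_setOf_eq, Set.mem_insert_iff, Set.mem_singleton_iff]
    constructor
    · intro hx
      set y : ℤ := (x.val : ℤ) with hy
      have hyx : ((y : ℤ) : ZMod (p^k)) = x := by
        rw [hy]; push_cast; exact ZMod.natCast_rightInverse x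
      have hdy : ((p:ℤ)^k) ∣ y^2+3 := by
        rw [hcast, ← ZMod.intCast_zmod_eq_zero_iff_dvd]
        push_cast
        rw [hyx]
        linear_combination hx
      rcases int_key p k hp hp2 hp3 y w hdy hw hk with h | h
      · left
        have : (((y - w : ℤ)) : ZMod (p^k)) = 0 := by
          rw [ZMod.intCast_zmod_eq_zero_iff_dvd, ← hcast]; exact_mod_cast h
        push_cast at this
        rw [hyx] at this
        linear_combination this
      · right
        have : (((y + w : ℤ)) : ZMod (p^k)) = 0 := by
          rw [ZMod.intCast_zmod_eq_zero_iff_dvd, ← hcast]; exact_mod_cast h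
        push_cast at this
        rw [hyx] at this
        linear_combination this
    · rintro (rfl | rfl)
      · exact hx₀
      · rw [neg_sq]; exact hx₀
  have : gcount (p^k) = ({x : ZMod (p^k) | x^2 = -3} : Set _).ncard := by
    rw [← Nat.card_coe_set_eq]; rfl
  rw [this, hset, Set.ncard_pair hne]

lemma lemA : ∀ n : ℕ, Odd n → (∃ w : ℤ, (n:ℤ) ∣ w^2+3) →
    gcount n = 2 ^ ((n.primeFactors \ {3}).card) := by
  refine Nat.recOnPosPrimePosCoprime ?_ ?_ ?_ ?_
  · rintro p k hp hk hodd ⟨w, hw⟩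
    have hp2 : p ≠ 2 := by
      rintro rfl
      exact (Nat.not_even_iff_odd.mpr hodd) (Nat.even_pow.mpr ⟨even_two, hk.ne'⟩)
    by_cases hp3 : p = 3
    · subst hp3
      have hk1 : k = 1 := by
        by_contra hk1
        have h9 : (9:ℤ) ∣ w^2+3 := by
          refine dvd_trans ?_ hw
          have h92 : (9:ℤ) = (3:ℤ)^2 := by norm_num
          rw [h92]
          exact_mod_cast pow_dvd_pow (3:ℤ) (by omega)
        have h3w : (3:ℤ) ∣ w := by
          have h3 : (3:ℤ) ∣ w^2 := by
            have hw2 : (w^2 : ℤ) = (w^2+3) - 3 := by ring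
            rw [hw2]; exact dvd_sub (dvd_trans (by norm_num) h9) (by norm_num)
          exact (Int.Prime.dvd_pow' (by norm_num) h3)
        obtain ⟨t, rfl⟩ := h3w
        obtain ⟨s, hs⟩ := h9
        have : (9:ℤ) ∣ 3 := ⟨s - t^2, by linear_combination hs⟩
        norm_num at this
      subst hk1
      simp only [pow_one]
      rw [gcount_three, Nat.Prime.primeFactors Nat.prime_three]
      simp
    · rw [gcount_prime_pow p k hp hp2 hp3 hk w (by exact_mod_cast hw)]
      rw [Nat.primeFactors_prime_pow hk.ne' hp]
      have hss : ({p} : Finset ℕ) \ {3} = {p} := by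
        rw [Finset.sdiff_eq_self_iff_disjoint, Finset.disjoint_singleton]
        exact hp3
      rw [hss, Finset.card_singleton, pow_one]
  · intro h; exact absurd h (by decide)
  · intro _ _; rw [gcount_one]; simp
  · rintro a b ha hb hab IHa IHb hodd ⟨w, hw⟩
    have hoa : Odd a := (Nat.Odd.of_mul_left hodd)
    have hob : Odd b := (Nat.Odd.of_mul_right hodd)
    have hwa : (a:ℤ) ∣ w^2+3 := dvd_trans (by exact_mod_cast Dvd.intro b rfl) hw
    have hwb : (b:ℤ) ∣ w^2+3 := dvd_trans (by exact_mod_cast Dvd.intro_left a rfl) hw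
    rw [gcount_mul a b hab, IHa hoa ⟨w, hwa⟩, IHb hob ⟨w, hwb⟩]
    rw [Nat.primeFactors_mul (by omega) (by omega), ← pow_add]
    congr 1
    have hdisj : Disjoint (a.primeFactors \ {3}) (b.primeFactors \ {3}) :=
      (Nat.Coprime.disjoint_primeFactors hab).mono Finset.sdiff_subset Finset.sdiff_subset
    rw [Finset.union_sdiff_distrib, Finset.card_union_of_disjoint hdisj]

lemma Pz_shift (Z : ℕ) (u : ℤ) : Pz Z (u + 2*Z) ↔ Pz Z u := by
  unfold Pz
  constructor <;> intro h
  · have : u^2+3 = ((u+2*Z)^2+3) - 4*Z*(u + Z) := by ring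
    rw [this]; exact dvd_sub h ⟨u + Z, rfl⟩
  · have : (u+2*Z)^2+3 = (u^2+3) + 4*Z*(u + Z) := by ring
    rw [this]; exact dvd_add h ⟨u + Z, rfl⟩

lemma count_shift (Z : ℕ) (a b : ℤ) :
    ((Finset.Ico a b).filter (Pz Z)).card
      = ((Finset.Ico (a+2*Z) (b+2*Z)).filter (Pz Z)).card := by
  apply Finset.card_nbij (fun u => u + 2*(Z:ℤ))
  · intro u hu
    simp only [Finset.mem_coe, Finset.mem_filter, Finset.mem_Ico] at hu ⊢
    exact ⟨⟨by linarith [hu.1.1], by linarith [hu.1.2]⟩, (Pz_shift Z u).mpr hu.2⟩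
  · intro u _ v _ h; simpa using h
  · intro v hv
    simp only [Finset.coe_filter, Finset.mem_Ico, Set.mem_setOf_eq, Set.mem_image] at hv ⊢
    exact ⟨v - 2*Z, ⟨⟨by linarith [hv.1.1], by linarith [hv.1.2]⟩,
      by rw [← Pz_shift Z]; simpa using hv.2⟩, by ring⟩

lemma count_reflect (Z : ℕ) (hZ : 5 ≤ Z) :
    ((Finset.Ico (0:ℤ) Z).filter (Pz Z)).card
      = ((Finset.Ico (3*(Z:ℤ)) (4*Z)).filter (Pz Z)).card := by
  have hZ' : (5:ℤ) ≤ Z := by exact_mod_cast hZ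
  have hPrefl : ∀ u : ℤ, Pz Z (4*Z - u) ↔ Pz Z u := by
    intro u
    unfold Pz
    constructor <;> intro h
    · have : u^2+3 = ((4*Z-u)^2+3) + 4*Z*(2*u - 4*Z) := by ring
      rw [this]; exact dvd_add h ⟨2*u - 4*Z, rfl⟩
    · have : (4*Z-u)^2+3 = (u^2+3) + 4*Z*(4*Z-2*u) := by ring
      rw [this]; exact dvd_add h ⟨4*Z-2*u, rfl⟩
  have hP0 : ¬ Pz Z 0 := by
    unfold Pz
    intro h
    have := Int.le_of_dvd (by norm_num) h
    norm_num at this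
    linarith
  have hPZ : ¬ Pz Z (Z:ℤ) := by
    unfold Pz
    intro h
    have h1 : (Z:ℤ) ∣ (Z:ℤ)^2+3 := dvd_trans ⟨4, by ring⟩ h
    have h2 : (Z:ℤ) ∣ 3 := by
      have : (3:ℤ) = ((Z:ℤ)^2+3) - Z*Z := by ring
      rw [this]; exact dvd_sub h1 ⟨Z, by ring⟩
    have := Int.le_of_dvd (by norm_num) h2
    linarith
  apply Finset.card_nbij (fun u => 4*(Z:ℤ) - u)
  · intro u hu
    simp only [Finset.mem_coe, Finset.mem_filter, Finset.mem_Ico] at hu ⊢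
    have hu0 : u ≠ 0 := by rintro rfl; exact hP0 hu.2
    refine ⟨⟨by linarith [hu.1.2], ?_⟩, (hPrefl u).mpr hu.2⟩
    have : 0 < u := lt_of_le_of_ne hu.1.1 (Ne.symm hu0)
    linarith
  · intro u _ v _ h; simp only at h; linarith [h]
  · intro v hv
    simp only [Finset.coe_filter, Finset.mem_Ico, Set.mem_setOf_eq, Set.mem_image] at hv ⊢
    have hvP : Pz Z (4*Z - v) := (hPrefl v).mpr hv.2
    have hne : 4*(Z:ℤ) - v ≠ Z := by
      intro h; rw [h] at hvP; exact hPZ hvP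
    refine ⟨4*Z - v, ⟨⟨by linarith [hv.1.2], ?_⟩, hvP⟩, by ring⟩
    have : 4*(Z:ℤ) - v ≤ Z := by linarith [hv.1.1]
    exact lt_of_le_of_ne this hne

lemma count_quarter (Z : ℕ) (hZ : 5 ≤ Z) :
    ((Finset.Ico (0:ℤ) (4*Z)).filter (Pz Z)).card
      = 4 * ((Finset.Ico (Z:ℤ) (2*Z)).filter (Pz Z)).card := by
  have hZ' : (5:ℤ) ≤ Z := by exact_mod_cast hZ
  have h01 : Finset.Ico (0:ℤ) (4*Z) = Finset.Ico (0:ℤ) (2*Z) ∪ Finset.Ico (2*(Z:ℤ)) (4*Z) :=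
    (Finset.Ico_union_Ico_eq_Ico (by linarith) (by linarith)).symm
  have h02 : Finset.Ico (0:ℤ) (2*Z) = Finset.Ico (0:ℤ) Z ∪ Finset.Ico ((Z:ℤ)) (2*Z) :=
    (Finset.Ico_union_Ico_eq_Ico (by linarith) (by linarith)).symm
  have h03 : Finset.Ico (2*(Z:ℤ)) (4*Z) = Finset.Ico (2*(Z:ℤ)) (3*Z) ∪ Finset.Ico (3*(Z:ℤ)) (4*Z) :=
    (Finset.Ico_union_Ico_eq_Ico (by linarith) (by linarith)).symm
  have c2 : ((Finset.Ico (2*(Z:ℤ)) (3*Z)).filter (Pz Z)).card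
      = ((Finset.Ico (0:ℤ) Z).filter (Pz Z)).card := by
    rw [count_shift Z 0 Z]; congr 2 <;> ring
  have c3 : ((Finset.Ico (3*(Z:ℤ)) (4*Z)).filter (Pz Z)).card
      = ((Finset.Ico ((Z:ℤ)) (2*Z)).filter (Pz Z)).card := by
    rw [count_shift Z Z (2*Z)]; congr 2 <;> ring
  have c0 : ((Finset.Ico (0:ℤ) (Z:ℤ)).filter (Pz Z)).card
      = ((Finset.Ico ((Z:ℤ)) (2*Z)).filter (Pz Z)).card := by
    rw [count_reflect Z hZ, c3]
  rw [h01, Finset.filter_union, Finset.card_union_of_disjoint, h02, h03,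
    Finset.filter_union, Finset.filter_union,
    Finset.card_union_of_disjoint, Finset.card_union_of_disjoint, c2, c3, c0]
  · ring
  · exact Finset.disjoint_filter_filter (Finset.Ico_disjoint_Ico_consecutive _ _ _)
  · exact Finset.disjoint_filter_filter (Finset.Ico_disjoint_Ico_consecutive _ _ _)
  · exact Finset.disjoint_filter_filter (Finset.Ico_disjoint_Ico_consecutive _ _ _)

lemma count_total (Z : ℕ) (hZ : 0 < Z) :
    ((Finset.Ico (0:ℤ) (4*Z)).filter (Pz Z)).card = gcount (4*Z) := by
  haveI : NeZero (4*Z) := ⟨by omega⟩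
  have hcast : ((4*Z : ℕ) : ℤ) = 4*(Z:ℤ) := by push_cast; ring
  rw [gcount, Nat.card_eq_fintype_card, Fintype.card_subtype]
  apply Finset.card_nbij (fun u : ℤ => (u : ZMod (4*Z)))
  · intro u hu
    simp only [Finset.mem_coe, Finset.mem_filter, Finset.mem_Ico, Finset.mem_univ, true_and] at hu ⊢
    have : ((u^2+3 : ℤ) : ZMod (4*Z)) = 0 := by
      rw [ZMod.intCast_zmod_eq_zero_iff_dvd, hcast]; exact hu.2
    push_cast at this
    linear_combination this
  · intro u hu v hv h
    simp only [Finset.coe_filter, Finset.mem_Ico, Set.mem_setOf_eq] at hu hv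
    have := (ZMod.intCast_eq_intCast_iff _ _ _).mp h
    have hd := this.dvd
    rw [hcast] at hd
    have := Int.eq_zero_of_abs_lt_dvd hd
      (by rw [abs_lt]; constructor <;> linarith [hu.1.1, hu.1.2, hv.1.1, hv.1.2])
    linarith
  · intro x hx
    simp only [Finset.coe_filter, Finset.mem_univ, true_and, Set.mem_setOf_eq, Set.mem_image,
      Finset.mem_Ico] at hx ⊢
    refine ⟨(x.val : ℤ), ⟨⟨by positivity, ?_⟩, ?_⟩, ?_⟩
    · rw [← hcast]; exact_mod_cast ZMod.val_lt x
    · rw [Pz, ← hcast, ← ZMod.intCast_zmod_eq_zero_iff_dvd]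
      push_cast
      rw [ZMod.natCast_rightInverse x]
      linear_combination hx
    · push_cast; exact ZMod.natCast_rightInverse x

lemma F_expand (a b d : ℤ) : F ![a, b, d] =
    (a+b+d)^2 - (a+b+d) - 4*(a*b + a*d + b*d) := by
  simp [F, Fin.sum_univ_three]

lemma F_expand' (x : Fin 3 → ℤ) : F x =
    (x 0 + x 1 + x 2)^2 - (x 0 + x 1 + x 2) - 4*(x 0 * x 1 + x 0 * x 2 + x 1 * x 2) := by
  simp [F, Fin.sum_univ_three]

lemma witness (c : ℕ) (hc : c ∈ C3) : ∃ w : ℤ, ((2*c+1 : ℕ) : ℤ) ∣ w^2+3 := by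
  obtain ⟨x, hF, _, i, hi⟩ := hc
  rw [F_expand'] at hF
  have hZ : ((2*c+1 : ℕ) : ℤ) = 2*(c:ℤ)+1 := by push_cast; ring
  fin_cases i
  · have hi' : x 0 = (c:ℤ) := hi
    refine ⟨2*(x 1 - x 2), 2*(2*(x 1)+1) + 2*(2*(x 2)+1) - (2*(c:ℤ)+1), ?_⟩
    rw [hZ, ← hi']
    linear_combination 4*hF
  · have hi' : x 1 = (c:ℤ) := hi
    refine ⟨2*(x 0 - x 2), 2*(2*(x 0)+1) + 2*(2*(x 2)+1) - (2*(c:ℤ)+1), ?_⟩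
    rw [hZ, ← hi']
    linear_combination 4*hF
  · have hi' : x 2 = (c:ℤ) := hi
    refine ⟨2*(x 0 - x 1), 2*(2*(x 0)+1) + 2*(2*(x 1)+1) - (2*(c:ℤ)+1), ?_⟩
    rw [hZ, ← hi']
    linear_combination 4*hF

lemma main_bij (c : ℕ) (hc1 : 1 < c) :
    {p : ℤ × ℤ | 0 ≤ p.1 ∧ p.1 ≤ p.2 ∧ p.2 ≤ (c : ℤ) ∧ F ![p.1, p.2, (c : ℤ)] = 0}.ncard
      = ((Finset.Ico ((2*c+1 : ℕ) : ℤ) (2*((2*c+1 : ℕ) : ℤ))).filter (Pz (2*c+1))).card := by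
  set Z : ℕ := 2*c+1 with hZdef
  have hZ : (Z:ℤ) = 2*(c:ℤ)+1 := by rw [hZdef]; push_cast; ring
  have hc : (2:ℤ) ≤ (c:ℤ) := by exact_mod_cast hc1
  set S := {p : ℤ × ℤ | 0 ≤ p.1 ∧ p.1 ≤ p.2 ∧ p.2 ≤ (c : ℤ) ∧ F ![p.1, p.2, (c : ℤ)] = 0}
    with hS
  set f : ℤ × ℤ → ℤ := fun p => 2*(p.2 - p.1) + Z with hf
  set T : Finset ℤ := (Finset.Ico ((Z : ℕ) : ℤ) (2*((Z : ℕ) : ℤ))).filter (Pz Z) with hT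
  have hFiff : ∀ a b : ℤ, F ![a, b, (c:ℤ)] = 0 ↔ (2*(b-a)+(Z:ℤ))^2 + 3 = 4*(2*b+1)*Z := by
    intro a b
    constructor
    · intro h
      rw [F_expand] at h
      rw [hZ]
      linear_combination 4*h
    · intro h
      have h4 : (4:ℤ) * F ![a, b, (c:ℤ)] = 0 := by
        rw [F_expand]
        rw [hZ] at h
        linear_combination h
      exact (mul_eq_zero.mp h4).resolve_left (by norm_num)
  have hbij : Set.BijOn f S (T : Set ℤ) := by
    refine ⟨?_, ?_, ?_⟩
    · rintro ⟨a, b⟩ ⟨h0, hab, hbc, hFeq⟩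
      have key := (hFiff a b).mp hFeq
      simp only [hT, Finset.coe_filter, Set.mem_setOf_eq, Finset.mem_Ico]
      refine ⟨⟨by simp [hf]; linarith, by simp [hf]; linarith [hZ]⟩, ?_⟩
      · show (4*(Z:ℤ)) ∣ (f (a,b))^2 + 3
        refine ⟨2*b+1, ?_⟩
        simp only [hf]
        linarith [key]
    · rintro ⟨a, b⟩ ⟨h0, hab, hbc, hFeq⟩ ⟨a', b'⟩ ⟨h0', hab', hbc', hFeq'⟩ heq
      have key := (hFiff a b).mp hFeq
      have key' := (hFiff a' b').mp hFeq'
      simp only [hf] at heq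
      have hu : 2*(b-a)+(Z:ℤ) = 2*(b'-a')+(Z:ℤ) := heq
      have hZpos : (0:ℤ) < Z := by rw [hZ]; linarith
      have hbb : b = b' := by
        rw [hu] at key
        have h8 : 4*(2*b+1)*(Z:ℤ) = 4*(2*b'+1)*Z := by linarith [key, key']
        have : (8*(Z:ℤ)) * (b - b') = 0 := by linarith
        have := mul_eq_zero.mp this
        rcases this with h | h
        · exfalso; linarith
        · linarith
      subst hbb
      have : a = a' := by linarith
      simp [this]
    · intro u hu
      simp only [hT, Finset.coe_filter, Set.mem_setOf_eq, Finset.mem_Ico] at hu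
      obtain ⟨⟨huZ, hu2Z⟩, k, hk⟩ := hu
      have hZpos : (0:ℤ) < Z := by rw [hZ]; linarith
      -- u is odd
      have hodd : Odd u := by
        rcases Int.even_or_odd u with ⟨v, rfl⟩ | h
        · exfalso
          have : (v+v)^2 + 3 = 4*(v^2) + 3 := by ring
          rw [this] at hk
          have h4 : (4:ℤ) ∣ 4*(Z:ℤ)*k := ⟨(Z:ℤ)*k, by ring⟩
          rw [← hk] at h4
          obtain ⟨s, hs⟩ := h4
          omega
        · exact h
      obtain ⟨t, rfl⟩ := hodd
      -- k is odd
      have hZk : (Z:ℤ)*k = t^2+t+1 := by linarith [hk]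
      have hkodd : Odd k := by
        have hev : Even (t^2+t) := by
          have := Int.even_mul_succ_self t
          convert this using 1
          ring
        obtain ⟨s, hs⟩ := hev
        have : Odd ((Z:ℤ)*k) := ⟨s, by rw [hZk]; omega⟩
        rcases Int.even_or_odd k with hke | hko
        · exfalso
          obtain ⟨m, rfl⟩ := hke
          obtain ⟨r, hr⟩ := this
          have : (Z:ℤ)*(m+m) = 2*((Z:ℤ)*m) := by ring
          omega
        · exact hko
      obtain ⟨m, rfl⟩ := hkodd
      refine ⟨(m - t + c, m), ⟨?_, ?_, ?_, ?_⟩, ?_⟩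
      · show (0:ℤ) ≤ m - t + c
        have hgt : (2*t+1) < (2*m+1) + (Z:ℤ) := by
          nlinarith [sq_nonneg (2*t+1 - 2*(Z:ℤ)), hk, hZpos]
        rw [hZ] at hgt
        linarith
      · show (m - t + (c:ℤ)) ≤ m
        rw [hZ] at huZ
        linarith
      · show (m:ℤ) ≤ c
        have hkZ : (2*m+1) ≤ (Z:ℤ) := by
          nlinarith [hk, hu2Z, huZ, hZpos]
        rw [hZ] at hkZ
        linarith
      · rw [hFiff]
        have : 2*((m:ℤ) - (m - t + c)) + (Z:ℤ) = 2*t+1 := by rw [hZ]; ring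
        rw [this]
        linarith [hk]
      · simp only [hf]
        rw [hZ]
        ring
  have h1 : (f '' S).ncard = S.ncard := Set.ncard_image_of_injOn hbij.injOn
  rw [← h1, hbij.image_eq, Set.ncard_coe_finset]

/-- For `c ∈ C_3` with `c > 1`, the number of 3-color fair games having `c` as the
largest coordinate (counted up to permutation, i.e. as ascending triples
`(a, b, c)`) is `2^(m−1)`, where `m` is the number of distinct prime factors of
`2c+1` other than `3`. -/
theorem stmt_14 (c : ℕ) (hc1 : 1 < c) (hc : c ∈ C3) :
    {p : ℤ × ℤ | 0 ≤ p.1 ∧ p.1 ≤ p.2 ∧ p.2 ≤ (c : ℤ) ∧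
        F ![p.1, p.2, (c : ℤ)] = 0}.ncard =
      2 ^ (((2 * c + 1).primeFactors \ {3}).card - 1) := by
  obtain ⟨w, hw⟩ := witness c hc
  have hZ5 : 5 ≤ 2*c+1 := by omega
  have hmain := main_bij c hc1
  have hq := count_quarter (2*c+1) hZ5
  have ht := count_total (2*c+1) (by omega)
  have hcop : Nat.Coprime 4 (2*c+1) := by
    have h2 : Nat.Coprime 2 (2*c+1) := Nat.prime_two.coprime_iff_not_dvd.mpr (by omega)
    have : (4:ℕ) = 2^2 := rfl
    rw [this]
    exact Nat.Coprime.pow_left _ h2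
  have hmul := gcount_mul 4 (2*c+1) hcop
  have hA := lemA (2*c+1) ⟨c, by ring⟩ ⟨w, hw⟩
  rw [gcount_four, hA] at hmul
  rw [hmain]
  set m := ((2*c+1).primeFactors \ {3}).card with hm
  have h4 : 4 * ((Finset.Ico ((2*c+1 : ℕ) : ℤ) (2*((2*c+1 : ℕ) : ℤ))).filter (Pz (2*c+1))).card
      = 2 * 2^m := by
    rw [← hq, ht, hmul]
  rcases m with _ | m'
  · exfalso; omega
  · have h2 : 2 * 2^(m'+1) = 4 * 2^m' := by rw [pow_succ]; ring
    rw [h2] at h4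
    have : ((Finset.Ico ((2*c+1 : ℕ) : ℤ) (2*((2*c+1 : ℕ) : ℤ))).filter (Pz (2*c+1))).card
        = 2^m' := by omega
    rw [this]
    congr 1
end
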